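/- Let B be an m×d real matrix whose rows are linearly independent, let n be a natural number, let 𝒯 be a set of n×m real matrices that is linearly independent in the vector space of n×m real matrices, and let λ ∈ (0,1) with λ ≠ 1/2. Let T_A, T_B ∈ 𝒯 and set ṽ = λ·(T_A B) + (1−λ)·(T_B B). Then for all T, T' ∈ 𝒯, the equation λ·(T B) + (1−λ)·(T' B) = ṽ implies T = T_A and T' = T_B; in particular, (v, v') = (T_A B, T_B B) is the unique solution of ṽ = λ·v + (1−λ)·v' among matrices of the form v = T B, v' = T' B with T, T' ∈ 𝒯. -/

import Mathlib

private lemma mulB_cancel {n m d : ℕ} (B : Matrix (Fin m) (Fin d) ℝ)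
    (hB : LinearIndependent ℝ (fun i : Fin m => (B i : Fin d → ℝ)))
    {X Y : Matrix (Fin n) (Fin m) ℝ} (h : X * B = Y * B) : X = Y := by
  have hz : (X - Y) * B = 0 := by rw [Matrix.sub_mul, h, sub_self]
  have key := (Fintype.linearIndependent_iff.mp hB)
  ext i j
  have hrow : ∑ k, (X - Y) i k • (B k) = (0 : Fin d → ℝ) := by
    funext l
    have := congrFun (congrFun hz i) l
    simpa [Matrix.mul_apply, Finset.sum_apply] using this
  have := key (fun k => (X - Y) i k) hrow j
  have : X i j - Y i j = 0 := by simpa [Matrix.sub_apply] using this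
  linarith

theorem stmt_12 {n m d : ℕ} (B : Matrix (Fin m) (Fin d) ℝ)
    (hB : LinearIndependent ℝ (fun i : Fin m => (B i : Fin d → ℝ)))
    (𝒯 : Set (Matrix (Fin n) (Fin m) ℝ))
    (h𝒯 : LinearIndependent ℝ (fun T : 𝒯 => (T : Matrix (Fin n) (Fin m) ℝ)))
    {lam : ℝ} (h0 : 0 < lam) (h1 : lam < 1) (hhalf : lam ≠ 1 / 2)
    {TA TB : Matrix (Fin n) (Fin m) ℝ} (hTA : TA ∈ 𝒯) (hTB : TB ∈ 𝒯) :
    ∀ T T' : Matrix (Fin n) (Fin m) ℝ, T ∈ 𝒯 → T' ∈ 𝒯 →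
      lam • (T * B) + (1 - lam) • (T' * B) = lam • (TA * B) + (1 - lam) • (TB * B) →
      T = TA ∧ T' = TB := by
  intro T T' hT hT' heq
  -- cancel B
  have hmat : lam • T + (1 - lam) • T' = lam • TA + (1 - lam) • TB := by
    apply mulB_cancel B hB
    simpa [Matrix.add_mul, Matrix.smul_mul] using heq
  by_cases hTTA : T = TA
  · refine ⟨hTTA, ?_⟩
    subst hTTA
    have h2 : (1 - lam) • T' = (1 - lam) • TB := by
      have := hmat
      abel_nf at this ⊢
      linear_combination (norm := module) this
    have hne : (1 : ℝ) - lam ≠ 0 := by linarith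
    exact smul_right_injective _ hne h2
  · exfalso
    set a : 𝒯 := ⟨T, hT⟩
    set b : 𝒯 := ⟨T', hT'⟩
    set c : 𝒯 := ⟨TA, hTA⟩
    set e : 𝒯 := ⟨TB, hTB⟩
    have hl : (lam • Finsupp.single a 1 + (1 - lam) • Finsupp.single b 1
        - lam • Finsupp.single c 1 - (1 - lam) • Finsupp.single e (1:ℝ)) = 0 := by
      apply linearIndependent_iff.mp h𝒯
      simp only [map_sub, map_add, map_smul, Finsupp.linearCombination_single, one_smul]
      show lam • T + (1 - lam) • T' - lam • TA - (1 - lam) • TB = 0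
      linear_combination (norm := module) hmat
    have hc := DFunLike.congr_fun hl c
    simp only [Finsupp.add_apply, Finsupp.sub_apply, Finsupp.smul_apply,
      Finsupp.single_apply, smul_eq_mul, Finsupp.coe_zero, Pi.zero_apply] at hc
    have hac : ¬ (a = c) := by
      intro h; exact hTTA (congrArg Subtype.val h)
    simp only [if_true] at hc
    split_ifs at hc with hbc hec hec
    · simp at hc; linarith
    · have : lam = 1/2 := by linarith
      exact hhalf this
    · simp at hc; linarith
    · simp at hc; linarith
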